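/- Let R⁽¹⁾, R⁽²⁾, R⁽³⁾ ∈ SO(3) have third rows r₃⁽¹⁾, r₃⁽²⁾, r₃⁽³⁾ that are linearly independent. Then the 6×3 pure common lines matrix A associated to these three rotations has rank exactly 3. -/

import Mathlib

open Matrix

/-- The pure common lines matrix of rotations `R⁽¹⁾,…,R⁽ⁿ⁾`. -/
def pureCLM {n : ℕ} (R : Fin n → Matrix (Fin 3) (Fin 3) ℝ) :
    Matrix (Fin n × Fin 2) (Fin n) ℝ :=
  Matrix.of fun p j =>
    if p.1 = j then 0
    else (R p.1) p.2.castSucc ⬝ᵥ (crossProduct ((R p.1) 2) ((R j) 2))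

theorem stmt17 (R : Fin 3 → Matrix (Fin 3) (Fin 3) ℝ)
    (hR : ∀ i, R i ∈ Matrix.specialOrthogonalGroup (Fin 3) ℝ)
    (hli : LinearIndependent ℝ (fun i => (R i) 2)) :
    (pureCLM R).rank = 3 := by
  classical
  set r : Fin 3 → Fin 3 → ℝ := fun i => R i 2 with hr
  have hdet : (Matrix.of r).det ≠ 0 := by
    have hu : IsUnit (Matrix.of r) :=
      Matrix.linearIndependent_rows_iff_isUnit.mp (by simpa [hr] using hli)
    exact ((Matrix.isUnit_iff_isUnit_det _).mp hu).ne_zero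
  have hA : ∀ (i j : Fin 3) (k : Fin 2),
      pureCLM R (i, k) j = (R i) k.castSucc ⬝ᵥ crossProduct (r i) (r j) := by
    intro i j k
    simp only [pureCLM, Matrix.of_apply]
    split
    · next h => subst h; simp [cross_self]
    · rfl
  have hinj : Function.Injective (pureCLM R).mulVecLin := by
    rw [← LinearMap.ker_eq_bot, LinearMap.ker_eq_bot']
    intro v hv
    set w : Fin 3 → ℝ := v 0 • r 0 + v 1 • r 1 + v 2 • r 2 with hw
    have hcw : ∀ i, crossProduct (r i) w = v 0 • crossProduct (r i) (r 0)
        + v 1 • crossProduct (r i) (r 1) + v 2 • crossProduct (r i) (r 2) := by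
      intro i
      simp [hw, map_add, _root_.map_smul]
    -- dot of first two rows of R i with cross (r i) w vanish
    have hdot : ∀ (i : Fin 3) (k : Fin 2),
        (R i) k.castSucc ⬝ᵥ crossProduct (r i) w = 0 := by
      intro i k
      have h : ∑ j, pureCLM R (i, k) j * v j = 0 := by
        simpa [Matrix.mulVec, dotProduct] using congrFun hv (i, k)
      rw [Fin.sum_univ_three, hA i 0 k, hA i 1 k, hA i 2 k] at h
      rw [hcw i]
      simp only [dotProduct_add, dotProduct_smul, smul_eq_mul]
      linarith [h]
    have hcross : ∀ i, crossProduct (r i) w = 0 := by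
      intro i
      have horth : star (R i) * R i = 1 :=
        (Matrix.mem_orthogonalGroup_iff' (Fin 3) ℝ).mp
          ((Matrix.mem_specialOrthogonalGroup_iff.mp (hR i)).1)
      have hRv : R i *ᵥ crossProduct (r i) w = 0 := by
        funext k
        fin_cases k
        · simpa [Matrix.mulVec, dotProduct] using hdot i 0
        · simpa [Matrix.mulVec, dotProduct] using hdot i 1
        · simpa [Matrix.mulVec, dotProduct, hr] using dot_self_cross (r i) w
      have := congrArg (fun u => star (R i) *ᵥ u) hRv
      simpa [Matrix.mulVec_mulVec, horth] using this
    -- triple products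
    have trip : ∀ a i : Fin 3, Matrix.det ![r a, r i, w] = 0 := by
      intro a i
      rw [← triple_product_eq_det, hcross i, dotProduct_zero]
    have e2 : Matrix.det ![r 1, r 0, w] = -(v 2 * (Matrix.of r).det) := by
      erw [Matrix.det_fin_three]; simp [Matrix.det_fin_three, hw]; ring
    have e1 : Matrix.det ![r 2, r 0, w] = v 1 * (Matrix.of r).det := by
      erw [Matrix.det_fin_three]; simp [Matrix.det_fin_three, hw]; ring
    have e0 : Matrix.det ![r 2, r 1, w] = -(v 0 * (Matrix.of r).det) := by
      erw [Matrix.det_fin_three]; simp [Matrix.det_fin_three, hw]; ring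
    have hv2 : v 2 = 0 := by
      have h : v 2 * (Matrix.of r).det = 0 := by
        have h' := trip 1 0; rw [e2] at h'; linarith
      exact (mul_eq_zero.mp h).resolve_right hdet
    have hv1 : v 1 = 0 := by
      have h : v 1 * (Matrix.of r).det = 0 := by
        have h' := trip 2 0; rw [e1] at h'; linarith
      exact (mul_eq_zero.mp h).resolve_right hdet
    have hv0 : v 0 = 0 := by
      have h : v 0 * (Matrix.of r).det = 0 := by
        have h' := trip 2 1; rw [e0] at h'; linarith
      exact (mul_eq_zero.mp h).resolve_right hdet
    funext j
    fin_cases j <;> simpa using ‹_›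
  have : (pureCLM R).rank = Module.finrank ℝ (Fin 3 → ℝ) := by
    rw [Matrix.rank, LinearMap.finrank_range_of_inj hinj]
  simp [this]
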